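/- Let {X_n}, {Y_n}, {Z_n} be sequences of random variables bounded below by -1 with E[X_n] = E[Y_n] = E[Z_n] = 0, Var(Y_n) = o(Var(X_n)), Var(Z_n) = o(Var(X_n)), Var(X_n) → 0, and Var(X_n)^{-1/2} X_n converging in distribution to N(0,1). Then Var(X_n - Y_n - Z_n)^{-1/2} log((1+X_n)/((1+Y_n)(1+Z_n))) converges in distribution to N(0,1). -/

import Mathlib

open MeasureTheory ProbabilityTheory Filter Set Topology

namespace Stmt11Aux



lemma log_one_add_sub_le {t : ℝ} (h : |t| ≤ 1/2) : |Real.log (1+t) - t| ≤ 2 * t^2 := by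
  have h1 : |(-t)| < 1 := by rw [abs_neg]; linarith [abs_nonneg t]
  have := Real.abs_log_sub_add_sum_range_le h1 1
  simp only [Finset.range_one, Finset.sum_singleton, pow_one] at this
  have h2 : (1 : ℝ) - -t = 1 + t := by ring
  rw [h2] at this
  have h3 : |(-t)| ^ 2 / (1 - |(-t)|) ≤ 2 * t^2 := by
    rw [abs_neg, sq_abs]
    rcases eq_or_ne t 0 with rfl | ht
    · simp
    · have ht2 : (0:ℝ) < t^2 := by positivity
      have : (1:ℝ)/2 ≤ 1 - |t| := by linarith
      rw [div_le_iff₀ (by linarith [abs_nonneg t])]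
      nlinarith [abs_nonneg t]
  calc |Real.log (1+t) - t| = |(-t)/(0+1) + Real.log (1+t)| := by
        rw [show (-t)/(0+1) + Real.log (1+t) = -(t - Real.log (1+t)) by ring, abs_neg, abs_sub_comm]
  _ ≤ _ := le_trans (by simpa using this) h3

noncomputable def Phi (x : ℝ) : ENNReal := gaussianReal 0 1 (Set.Iic x)

instance : NullSingletonClass (gaussianReal 0 1) :=
  ⟨fun x => gaussianReal_absolutelyContinuous 0 one_ne_zero (measure_singleton x)⟩

lemma Phi_ne_top (x : ℝ) : Phi x ≠ ⊤ := measure_ne_top _ _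

lemma Phi_lt_one (x : ℝ) : Phi x < 1 := by
  have hlt : gaussianReal 0 1 (Set.Ioi x) ≠ 0 := by
    intro h
    have := gaussianReal_absolutelyContinuous' 0 one_ne_zero h
    rw [Real.volume_Ioi] at this
    simp at this
  have hc := measure_compl (μ := gaussianReal 0 1) (measurableSet_Iic : MeasurableSet (Iic x)) (measure_ne_top _ _)
  rw [compl_Iic] at hc
  rw [measure_univ] at hc
  rcases lt_or_ge (Phi x) 1 with h | h
  · exact h
  · exfalso
    have h1 : Phi x = 1 := le_antisymm prob_le_one h
    rw [Phi] at h1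
    rw [h1] at hc
    simp at hc
    exact hlt hc

lemma Phi_mono : Monotone Phi := fun a b hab => measure_mono (Iic_subset_Iic.2 hab)

lemma Phi_tendsto_right (x : ℝ) :
    Tendsto (fun k : ℕ => Phi (x + 1/(k+1))) atTop (𝓝 (Phi x)) := by
  have hanti : Antitone (fun k : ℕ => Iic (x + 1/(k+1) : ℝ)) := by
    intro a b hab
    apply Iic_subset_Iic.2
    have : (1:ℝ)/(b+1) ≤ 1/(a+1) := by
      apply one_div_le_one_div_of_le (by positivity)
      exact_mod_cast by omega
    linarith
  have h := tendsto_measure_iInter_atTop (μ := gaussianReal 0 1)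
    (fun k => measurableSet_Iic.nullMeasurableSet) hanti ⟨0, measure_ne_top _ _⟩
  have hint : (⋂ k : ℕ, Iic (x + 1/(k+1) : ℝ)) = Iic x := by
    ext y
    simp only [mem_iInter, mem_Iic]
    constructor
    · intro h
      by_contra hy
      push_neg at hy
      obtain ⟨k, hk⟩ := exists_nat_one_div_lt (sub_pos.2 hy)
      have := h k
      push_cast at hk ⊢
      linarith
    · intro h k
      have : (0:ℝ) < 1/(k+1) := by positivity
      linarith
  rw [hint] at h
  exact h

lemma Phi_tendsto_left (x : ℝ) :
    Tendsto (fun k : ℕ => Phi (x - 1/(k+1))) atTop (𝓝 (Phi x)) := by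
  have hmono : Monotone (fun k : ℕ => Iic (x - 1/(k+1) : ℝ)) := by
    intro a b hab
    apply Iic_subset_Iic.2
    have : (1:ℝ)/(b+1) ≤ 1/(a+1) := by
      apply one_div_le_one_div_of_le (by positivity)
      exact_mod_cast by omega
    linarith
  have h := tendsto_measure_iUnion_atTop (μ := gaussianReal 0 1) hmono
  have hun : (⋃ k : ℕ, Iic (x - 1/(k+1) : ℝ)) = Iio x := by
    ext y
    simp only [mem_iUnion, mem_Iic, mem_Iio]
    constructor
    · rintro ⟨k, hk⟩
      have : (0:ℝ) < 1/(k+1) := by positivity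
      linarith
    · intro h
      obtain ⟨k, hk⟩ := exists_nat_one_div_lt (sub_pos.2 h)
      exact ⟨k, by push_cast at hk ⊢; linarith⟩
  rw [hun] at h
  have : gaussianReal 0 1 (Iio x) = Phi x := measure_congr Iio_ae_eq_Iic
  rw [this] at h
  exact h

lemma Phi_tendsto_atTop : Tendsto Phi atTop (𝓝 1) := by
  have := tendsto_measure_Iic_atTop (gaussianReal 0 1)
  rwa [measure_univ] at this

lemma Phi_tendsto_atBot : Tendsto Phi atBot (𝓝 0) := by
  have hanti : Monotone (fun x : ℝ => Iic x) := fun a b hab => Iic_subset_Iic.2 hab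
  have h := tendsto_measure_iInter_atBot (μ := gaussianReal 0 1)
    (fun x : ℝ => measurableSet_Iic.nullMeasurableSet) hanti ⟨0, measure_ne_top _ _⟩
  have : (⋂ x : ℝ, Iic x) = ∅ := by
    ext y; simp only [mem_iInter, mem_Iic, mem_empty_iff_false, iff_false, not_forall, not_le]
    exact ⟨y - 1, by linarith⟩
  rw [this, measure_empty] at h
  exact h





variable {Ω : Type*} [MeasureSpace Ω] [IsProbabilityMeasure (ℙ : Measure Ω)]

lemma cheb {W : Ω → ℝ} (hW : MemLp W 2 ℙ) (hE : ∫ ω, W ω ∂ℙ = 0) {c : ℝ} (hc : 0 < c) :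
    ℙ {ω | c ≤ |W ω|} ≤ ENNReal.ofReal (variance W ℙ / c^2) := by
  have h := meas_ge_le_variance_div_sq (μ := ℙ) hW hc
  have hE' : ℙ[W] = 0 := hE
  rw [hE'] at h
  simpa using h

lemma tight {U : ℕ → Ω → ℝ} (hUm : ∀ n, Measurable (U n))
    (hU : ∀ x : ℝ, Tendsto (fun n => ℙ {ω | U n ω ≤ x}) atTop (𝓝 (Phi x))) :
    ∀ η : ℝ, 0 < η → ∃ M : ℝ, 0 < M ∧
      ∀ᶠ n in atTop, ℙ {ω | M < |U n ω|} ≤ ENNReal.ofReal η := by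
  intro η hη
  set F : ℝ → ℝ := fun y => (Phi y).toReal with hFdef
  have hFtop : Tendsto F atTop (𝓝 1) := by
    have := (ENNReal.tendsto_toReal ENNReal.one_ne_top).comp Phi_tendsto_atTop
    simpa [Function.comp_def] using this
  have hFbot : Tendsto F atBot (𝓝 0) := by
    have := (ENNReal.tendsto_toReal (by simp : (0:ENNReal) ≠ ⊤)).comp Phi_tendsto_atBot
    simpa [Function.comp_def] using this
  have h1 : ∀ᶠ M in atTop, 1 - η/4 < F M :=
    hFtop.eventually (eventually_gt_nhds (by linarith))
  have h2 : ∀ᶠ y in atBot, F y < η/4 :=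
    hFbot.eventually (eventually_lt_nhds (by linarith))
  obtain ⟨M1, hM1⟩ := h1.exists_forall_of_atTop
  obtain ⟨M2, hM2⟩ := h2.exists_forall_of_atBot
  refine ⟨max 1 (max M1 (-M2)), by positivity, ?_⟩
  set M := max 1 (max M1 (-M2)) with hMdef
  have hFM : 1 - η/4 < F M := hM1 M (le_trans (le_max_left _ _) (le_max_right _ _))
  have hFmM : F (-M) < η/4 := by
    apply hM2
    have : -M2 ≤ M := le_trans (le_max_right _ _) (le_max_right _ _)
    linarith
  -- convergence of the two CDF sequences
  have hq : Tendsto (fun n => (ℙ {ω | U n ω ≤ M}).toReal) atTop (𝓝 (F M)) :=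
    (ENNReal.tendsto_toReal (Phi_ne_top M)).comp (hU M)
  have hq' : Tendsto (fun n => (ℙ {ω | U n ω ≤ -M}).toReal) atTop (𝓝 (F (-M))) :=
    (ENNReal.tendsto_toReal (Phi_ne_top (-M))).comp (hU (-M))
  have e1 : ∀ᶠ n in atTop, 1 - η/2 < (ℙ {ω | U n ω ≤ M}).toReal :=
    hq.eventually (eventually_gt_nhds (by linarith))
  have e2 : ∀ᶠ n in atTop, (ℙ {ω | U n ω ≤ -M}).toReal < η/2 :=
    hq'.eventually (eventually_lt_nhds (by linarith))
  filter_upwards [e1, e2] with n hn1 hn2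
  have hincl : {ω | M < |U n ω|} ⊆ {ω | U n ω ≤ -M} ∪ {ω | U n ω ≤ M}ᶜ := by
    intro ω hω
    simp only [mem_setOf_eq, mem_union, mem_compl_iff, not_le] at *
    rcases le_or_gt (U n ω) M with hc | hc
    · left
      rcases abs_cases (U n ω) with ⟨he, _⟩ | ⟨he, _⟩
      · exfalso; rw [he] at hω; exact absurd hω (not_lt.mpr hc)
      · rw [he] at hω; linarith
    · right; exact hc
  have hmeas : MeasurableSet {ω | U n ω ≤ M} := measurableSet_le (hUm n) measurable_const
  have hcompl : ℙ ({ω | U n ω ≤ M}ᶜ) = 1 - ℙ {ω | U n ω ≤ M} := by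
    rw [measure_compl hmeas (measure_ne_top _ _), measure_univ]
  have hb1 : ℙ {ω | U n ω ≤ -M} ≤ ENNReal.ofReal (η/2) := by
    rw [← ENNReal.ofReal_toReal (measure_ne_top ℙ {ω | U n ω ≤ -M})]
    exact ENNReal.ofReal_le_ofReal hn2.le
  have hb2 : ℙ ({ω | U n ω ≤ M}ᶜ) ≤ ENNReal.ofReal (η/2) := by
    rw [hcompl]
    rw [← ENNReal.ofReal_toReal (a := (1:ENNReal) - ℙ {ω | U n ω ≤ M})
      (by simp [ENNReal.sub_ne_top])]
    apply ENNReal.ofReal_le_ofReal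
    rw [ENNReal.toReal_sub_of_le prob_le_one ENNReal.one_ne_top]
    simp only [ENNReal.toReal_one]
    linarith
  calc ℙ {ω | M < |U n ω|} ≤ ℙ ({ω | U n ω ≤ -M} ∪ {ω | U n ω ≤ M}ᶜ) := measure_mono hincl
  _ ≤ ℙ {ω | U n ω ≤ -M} + ℙ ({ω | U n ω ≤ M}ᶜ) := measure_union_le _ _
  _ ≤ ENNReal.ofReal (η/2) + ENNReal.ofReal (η/2) := add_le_add hb1 hb2
  _ = ENNReal.ofReal η := by rw [← ENNReal.ofReal_add (by linarith) (by linarith)]; norm_num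

lemma slutsky {S U : ℕ → Ω → ℝ}
    (hU : ∀ x : ℝ, Tendsto (fun n => ℙ {ω | U n ω ≤ x}) atTop (𝓝 (Phi x)))
    (hd : ∀ ε : ℝ, 0 < ε → Tendsto (fun n => ℙ {ω | ε ≤ |S n ω - U n ω|}) atTop (𝓝 0)) :
    ∀ x : ℝ, Tendsto (fun n => ℙ {ω | S n ω ≤ x}) atTop (𝓝 (Phi x)) := by
  intro x
  set F : ℝ → ℝ := fun y => (Phi y).toReal with hFdef
  have hFmono : Monotone F := fun a b hab => ENNReal.toReal_mono (Phi_ne_top b) (Phi_mono hab)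
  have key : Tendsto (fun n => (ℙ {ω | S n ω ≤ x}).toReal) atTop (𝓝 (F x)) := by
    rw [Metric.tendsto_atTop]
    intro ε hε
    -- choose δ > 0 with F (x+δ) < F x + ε/4 and F (x-δ) > F x - ε/4
    have hFr : Tendsto (fun k : ℕ => F (x + 1/(k+1))) atTop (𝓝 (F x)) :=
      (ENNReal.tendsto_toReal (Phi_ne_top x)).comp (Phi_tendsto_right x)
    have hFl : Tendsto (fun k : ℕ => F (x - 1/(k+1))) atTop (𝓝 (F x)) :=
      (ENNReal.tendsto_toReal (Phi_ne_top x)).comp (Phi_tendsto_left x)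
    obtain ⟨k1, hk1⟩ := (hFr.eventually (eventually_lt_nhds (by linarith : F x < F x + ε/4))).exists
    obtain ⟨k2, hk2⟩ := (hFl.eventually (eventually_gt_nhds (by linarith : F x - ε/4 < F x))).exists
    set δ : ℝ := min (1/(k1+1)) (1/(k2+1)) with hδdef
    have hδpos : 0 < δ := lt_min (by positivity) (by positivity)
    have hδ1 : δ ≤ 1/(k1+1) := min_le_left _ _
    have hδ2 : δ ≤ 1/(k2+1) := min_le_right _ _
    have hup : F (x + δ) < F x + ε/4 := lt_of_le_of_lt (hFmono (by linarith)) hk1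
    have hlo : F x - ε/4 < F (x - δ) := lt_of_lt_of_le hk2 (hFmono (by linarith))
    have hq : Tendsto (fun n => (ℙ {ω | U n ω ≤ x + δ}).toReal) atTop (𝓝 (F (x+δ))) :=
      (ENNReal.tendsto_toReal (Phi_ne_top _)).comp (hU (x+δ))
    have hq' : Tendsto (fun n => (ℙ {ω | U n ω ≤ x - δ}).toReal) atTop (𝓝 (F (x-δ))) :=
      (ENNReal.tendsto_toReal (Phi_ne_top _)).comp (hU (x-δ))
    have hb : Tendsto (fun n => (ℙ {ω | δ ≤ |S n ω - U n ω|}).toReal) atTop (𝓝 0) := by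
      have := (ENNReal.tendsto_toReal (by simp : (0:ENNReal) ≠ ⊤)).comp (hd δ hδpos)
      simpa [Function.comp_def] using this
    have e1 : ∀ᶠ n in atTop, (ℙ {ω | U n ω ≤ x + δ}).toReal < F x + ε/4 :=
      hq.eventually (eventually_lt_nhds hup)
    have e2 : ∀ᶠ n in atTop, F x - ε/4 < (ℙ {ω | U n ω ≤ x - δ}).toReal :=
      hq'.eventually (eventually_gt_nhds hlo)
    have e3 : ∀ᶠ n in atTop, (ℙ {ω | δ ≤ |S n ω - U n ω|}).toReal < ε/4 :=
      hb.eventually (eventually_lt_nhds (by linarith))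
    rw [← eventually_atTop]
    filter_upwards [e1, e2, e3] with n hn1 hn2 hn3
    -- the two inclusions
    have incl1 : {ω | S n ω ≤ x} ⊆ {ω | U n ω ≤ x + δ} ∪ {ω | δ ≤ |S n ω - U n ω|} := by
      intro ω hω
      simp only [mem_setOf_eq, mem_union] at *
      by_cases hc : δ ≤ |S n ω - U n ω|
      · right; exact hc
      · left
        push_neg at hc
        have := abs_lt.mp hc
        linarith [this.1]
    have incl2 : {ω | U n ω ≤ x - δ} ⊆ {ω | S n ω ≤ x} ∪ {ω | δ ≤ |S n ω - U n ω|} := by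
      intro ω hω
      simp only [mem_setOf_eq, mem_union] at *
      by_cases hc : δ ≤ |S n ω - U n ω|
      · right; exact hc
      · left
        push_neg at hc
        have := abs_lt.mp hc
        linarith [this.2]
    have hle1 : (ℙ {ω | S n ω ≤ x}).toReal ≤
        (ℙ {ω | U n ω ≤ x + δ}).toReal + (ℙ {ω | δ ≤ |S n ω - U n ω|}).toReal := by
      rw [← ENNReal.toReal_add (measure_ne_top _ _) (measure_ne_top _ _)]
      apply ENNReal.toReal_mono (by simp [ENNReal.add_ne_top, measure_ne_top])
      exact le_trans (measure_mono incl1) (measure_union_le _ _)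
    have hle2 : (ℙ {ω | U n ω ≤ x - δ}).toReal ≤
        (ℙ {ω | S n ω ≤ x}).toReal + (ℙ {ω | δ ≤ |S n ω - U n ω|}).toReal := by
      rw [← ENNReal.toReal_add (measure_ne_top _ _) (measure_ne_top _ _)]
      apply ENNReal.toReal_mono (by simp [ENNReal.add_ne_top, measure_ne_top])
      exact le_trans (measure_mono incl2) (measure_union_le _ _)
    rw [Real.dist_eq, abs_lt]
    constructor
    · linarith
    · linarith
  have h2 := ENNReal.tendsto_ofReal key
  simp only [ENNReal.ofReal_toReal (measure_ne_top _ _)] at h2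
  rwa [ENNReal.ofReal_toReal (Phi_ne_top x)] at h2




variable {Ω : Type*} [MeasureSpace Ω] [IsProbabilityMeasure (ℙ : Measure Ω)]

lemma sq_ineq_up {δ a s : ℝ} (hδ : 0 < δ) : (a - s)^2 ≤ (1+δ)*a^2 + (1+1/δ)*s^2 := by
  have e : δ*((1+δ)*a^2 + (1+1/δ)*s^2) = δ*(1+δ)*a^2 + (δ+1)*s^2 := by
    field_simp
  have key : δ*(a-s)^2 ≤ δ*((1+δ)*a^2 + (1+1/δ)*s^2) := by
    rw [e]; nlinarith [sq_nonneg (δ*a + s)]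
  exact le_of_mul_le_mul_left key hδ

lemma sq_ineq_lo {δ a s : ℝ} (hδ : 0 < δ) : (1-δ)*a^2 - (1/δ)*s^2 ≤ (a - s)^2 := by
  have e : δ*((1-δ)*a^2 - (1/δ)*s^2) = δ*(1-δ)*a^2 - s^2 := by
    field_simp
  have key : δ*((1-δ)*a^2 - (1/δ)*s^2) ≤ δ*(a-s)^2 := by
    rw [e]; nlinarith [sq_nonneg (δ*a - s), sq_nonneg s]
  exact le_of_mul_le_mul_left key hδ

lemma ratio_tendsto (X Y Z : ℕ → Ω → ℝ)
    (hX2 : ∀ n, MemLp (X n) 2 ℙ) (hY2 : ∀ n, MemLp (Y n) 2 ℙ) (hZ2 : ∀ n, MemLp (Z n) 2 ℙ)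
    (hEX : ∀ n, ∫ ω, X n ω ∂ℙ = 0) (hEY : ∀ n, ∫ ω, Y n ω ∂ℙ = 0)
    (hEZ : ∀ n, ∫ ω, Z n ω ∂ℙ = 0)
    (hVY : (fun n => variance (Y n) ℙ) =o[atTop] fun n => variance (X n) ℙ)
    (hVZ : (fun n => variance (Z n) ℙ) =o[atTop] fun n => variance (X n) ℙ)
    (hv0 : ∀ᶠ n in atTop, 0 < variance (X n) ℙ) :
    Tendsto (fun n => variance (fun ω => X n ω - Y n ω - Z n ω) ℙ / variance (X n) ℙ)
      atTop (𝓝 1) := by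
  set v : ℕ → ℝ := fun n => variance (X n) ℙ with hv
  set vy : ℕ → ℝ := fun n => variance (Y n) ℙ with hvy
  set vz : ℕ → ℝ := fun n => variance (Z n) ℙ with hvz
  set w : ℕ → ℝ := fun n => variance (fun ω => X n ω - Y n ω - Z n ω) ℙ with hw
  -- identities
  have hvv : ∀ n, v n = ∫ ω, (X n ω)^2 ∂ℙ := by
    intro n
    have := variance_of_integral_eq_zero (hX2 n).aestronglyMeasurable.aemeasurable (hEX n)
    simpa [Pi.pow_apply] using this
  have hvyy : ∀ n, vy n = ∫ ω, (Y n ω)^2 ∂ℙ := by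
    intro n
    have := variance_of_integral_eq_zero (hY2 n).aestronglyMeasurable.aemeasurable (hEY n)
    simpa [Pi.pow_apply] using this
  have hvzz : ∀ n, vz n = ∫ ω, (Z n ω)^2 ∂ℙ := by
    intro n
    have := variance_of_integral_eq_zero (hZ2 n).aestronglyMeasurable.aemeasurable (hEZ n)
    simpa [Pi.pow_apply] using this
  have hD2 : ∀ n, MemLp (fun ω => X n ω - Y n ω - Z n ω) 2 ℙ := by
    intro n
    have h := (hX2 n).sub ((hY2 n).add (hZ2 n))
    have he : (X n - (Y n + Z n)) = (fun ω => X n ω - Y n ω - Z n ω) := by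
      funext ω; simp [sub_sub]
    rwa [he] at h
  have hED : ∀ n, ∫ ω, (X n ω - Y n ω - Z n ω) ∂ℙ = 0 := by
    intro n
    have hXi : Integrable (X n) ℙ := (hX2 n).integrable one_le_two
    have hYi : Integrable (Y n) ℙ := (hY2 n).integrable one_le_two
    have hZi : Integrable (Z n) ℙ := (hZ2 n).integrable one_le_two
    have hYZi : Integrable (fun ω => Y n ω + Z n ω) ℙ := hYi.add hZi
    have h1 : ∫ ω, (X n ω - (Y n ω + Z n ω)) ∂ℙ
        = (∫ ω, X n ω ∂ℙ) - ∫ ω, (Y n ω + Z n ω) ∂ℙ := integral_sub hXi hYZi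
    have h2 : ∫ ω, (Y n ω + Z n ω) ∂ℙ = (∫ ω, Y n ω ∂ℙ) + ∫ ω, Z n ω ∂ℙ :=
      integral_add hYi hZi
    simp only [sub_sub]
    rw [h1, h2, hEX n, hEY n, hEZ n]
    ring
  have hww : ∀ n, w n = ∫ ω, (X n ω - Y n ω - Z n ω)^2 ∂ℙ := by
    intro n
    have := variance_of_integral_eq_zero (hD2 n).aestronglyMeasurable.aemeasurable (hED n)
    simpa [Pi.pow_apply] using this
  -- second moment of Y+Z
  set m2 : ℕ → ℝ := fun n => ∫ ω, (Y n ω + Z n ω)^2 ∂ℙ with hm2def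
  have hS2 : ∀ n, MemLp (fun ω => Y n ω + Z n ω) 2 ℙ := fun n => (hY2 n).add (hZ2 n)
  have hm2nonneg : ∀ n, 0 ≤ m2 n := fun n => integral_nonneg (fun ω => sq_nonneg _)
  have hm2le : ∀ n, m2 n ≤ 2 * vy n + 2 * vz n := by
    intro n
    have hint1 : Integrable (fun ω => (Y n ω + Z n ω)^2) ℙ := (hS2 n).integrable_sq
    have hint2 : Integrable (fun ω => 2*(Y n ω)^2 + 2*(Z n ω)^2) ℙ :=
      (((hY2 n).integrable_sq.const_mul 2).add ((hZ2 n).integrable_sq.const_mul 2))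
    have hpt : ∀ ω, (Y n ω + Z n ω)^2 ≤ 2*(Y n ω)^2 + 2*(Z n ω)^2 := by
      intro ω; nlinarith [sq_nonneg (Y n ω - Z n ω)]
    have hsplit : ∫ ω, (2*(Y n ω)^2 + 2*(Z n ω)^2) ∂ℙ = 2 * vy n + 2 * vz n := by
      rw [integral_add ((hY2 n).integrable_sq.const_mul 2) ((hZ2 n).integrable_sq.const_mul 2),
        integral_const_mul, integral_const_mul, ← hvyy, ← hvzz]
    calc m2 n ≤ ∫ ω, (2*(Y n ω)^2 + 2*(Z n ω)^2) ∂ℙ := integral_mono hint1 hint2 hpt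
    _ = 2 * vy n + 2 * vz n := hsplit
  -- upper and lower bounds for each δ
  have hup : ∀ δ : ℝ, 0 < δ → ∀ n, w n ≤ (1+δ) * v n + (1+1/δ) * m2 n := by
    intro δ hδ n
    have hint1 : Integrable (fun ω => (X n ω - Y n ω - Z n ω)^2) ℙ := (hD2 n).integrable_sq
    have hint2 : Integrable (fun ω => (1+δ)*(X n ω)^2 + (1+1/δ)*(Y n ω + Z n ω)^2) ℙ :=
      (((hX2 n).integrable_sq.const_mul _).add ((hS2 n).integrable_sq.const_mul _))
    have hpt : ∀ ω, (X n ω - Y n ω - Z n ω)^2 ≤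
        (1+δ)*(X n ω)^2 + (1+1/δ)*(Y n ω + Z n ω)^2 := by
      intro ω
      have := sq_ineq_up (δ := δ) (a := X n ω) (s := Y n ω + Z n ω) hδ
      calc (X n ω - Y n ω - Z n ω)^2 = (X n ω - (Y n ω + Z n ω))^2 := by ring
      _ ≤ _ := this
    have hsplit : ∫ ω, ((1+δ)*(X n ω)^2 + (1+1/δ)*(Y n ω + Z n ω)^2) ∂ℙ
        = (1+δ) * v n + (1+1/δ) * m2 n := by
      rw [integral_add (((hX2 n).integrable_sq.const_mul _))
          (((hS2 n).integrable_sq.const_mul _)), integral_const_mul, integral_const_mul, ← hvv]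
    calc w n = ∫ ω, (X n ω - Y n ω - Z n ω)^2 ∂ℙ := hww n
    _ ≤ ∫ ω, ((1+δ)*(X n ω)^2 + (1+1/δ)*(Y n ω + Z n ω)^2) ∂ℙ :=
        integral_mono hint1 hint2 hpt
    _ = (1+δ) * v n + (1+1/δ) * m2 n := hsplit
  have hlow : ∀ δ : ℝ, 0 < δ → ∀ n, (1-δ) * v n - (1/δ) * m2 n ≤ w n := by
    intro δ hδ n
    have hint1 : Integrable (fun ω => (X n ω - Y n ω - Z n ω)^2) ℙ := (hD2 n).integrable_sq
    have hint2 : Integrable (fun ω => (1-δ)*(X n ω)^2 - (1/δ)*(Y n ω + Z n ω)^2) ℙ :=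
      (((hX2 n).integrable_sq.const_mul _).sub ((hS2 n).integrable_sq.const_mul _))
    have hpt : ∀ ω, (1-δ)*(X n ω)^2 - (1/δ)*(Y n ω + Z n ω)^2 ≤
        (X n ω - Y n ω - Z n ω)^2 := by
      intro ω
      have := sq_ineq_lo (δ := δ) (a := X n ω) (s := Y n ω + Z n ω) hδ
      calc (1-δ)*(X n ω)^2 - (1/δ)*(Y n ω + Z n ω)^2 ≤ (X n ω - (Y n ω + Z n ω))^2 := this
      _ = (X n ω - Y n ω - Z n ω)^2 := by ring
    have hsplit : ∫ ω, ((1-δ)*(X n ω)^2 - (1/δ)*(Y n ω + Z n ω)^2) ∂ℙ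
        = (1-δ) * v n - (1/δ) * m2 n := by
      rw [integral_sub (((hX2 n).integrable_sq.const_mul _))
          (((hS2 n).integrable_sq.const_mul _)), integral_const_mul, integral_const_mul, ← hvv]
    calc (1-δ) * v n - (1/δ) * m2 n
        = ∫ ω, ((1-δ)*(X n ω)^2 - (1/δ)*(Y n ω + Z n ω)^2) ∂ℙ := hsplit.symm
    _ ≤ ∫ ω, (X n ω - Y n ω - Z n ω)^2 ∂ℙ := integral_mono hint2 hint1 hpt
    _ = w n := (hww n).symm
  -- the limit
  rw [Metric.tendsto_atTop]
  intro ε hε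
  set δ : ℝ := min (ε/4) (1/2) with hδdef
  have hδpos : 0 < δ := lt_min (by linarith) (by norm_num)
  have hδle : δ ≤ ε/4 := min_le_left _ _
  have hc : (0:ℝ) < δ / (2*(1+1/δ)) := by positivity
  have hlit := (hVY.add hVZ).def hc
  have hev : ∀ᶠ n in atTop, (1+1/δ) * m2 n ≤ δ * v n := by
    filter_upwards [hlit, hv0] with n hn hvn
    have hnorm : ‖vy n + vz n‖ = vy n + vz n := by
      rw [Real.norm_eq_abs, abs_of_nonneg]
      exact add_nonneg (variance_nonneg _ _) (variance_nonneg _ _)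
    have hnormv : ‖v n‖ = v n := by
      rw [Real.norm_eq_abs, abs_of_nonneg (variance_nonneg _ _)]
    rw [hnorm, hnormv] at hn
    have h1 : m2 n ≤ 2 * (vy n + vz n) := by linarith [hm2le n]
    have h2 : (0:ℝ) < 1 + 1/δ := by positivity
    calc (1+1/δ) * m2 n ≤ (1+1/δ) * (2 * (vy n + vz n)) := by
          apply mul_le_mul_of_nonneg_left h1 h2.le
    _ ≤ (1+1/δ) * (2 * (δ / (2*(1+1/δ)) * v n)) := by
          apply mul_le_mul_of_nonneg_left _ h2.le
          apply mul_le_mul_of_nonneg_left hn (by norm_num)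
    _ = δ * v n := by field_simp
  rw [← eventually_atTop]
  filter_upwards [hev, hv0] with n hn hvn
  have h1δ : (1:ℝ)/δ ≤ 1 + 1/δ := by linarith
  have hm2d : (1/δ) * m2 n ≤ δ * v n :=
    le_trans (mul_le_mul_of_nonneg_right h1δ (hm2nonneg n)) hn
  have hupn : w n ≤ (1+2*δ) * v n := by
    have := hup δ hδpos n
    linarith
  have hlon : (1-2*δ) * v n ≤ w n := by
    have := hlow δ hδpos n
    linarith
  rw [Real.dist_eq, abs_lt]
  constructor
  · have : (1-2*δ) ≤ w n / v n := by
      rw [le_div_iff₀ hvn]; linarith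
    linarith
  · have : w n / v n ≤ 1+2*δ := by
      rw [div_le_iff₀ hvn]; linarith
    linarith


variable {Ω : Type*} [MeasureSpace Ω] [IsProbabilityMeasure (ℙ : Measure Ω)]

set_option maxHeartbeats 1000000 in
lemma diff_small (X Y Z : ℕ → Ω → ℝ)
    (hXmeas : ∀ n, Measurable (X n))
    (hX2 : ∀ n, MemLp (X n) 2 ℙ) (hY2 : ∀ n, MemLp (Y n) 2 ℙ) (hZ2 : ∀ n, MemLp (Z n) 2 ℙ)
    (hEX : ∀ n, ∫ ω, X n ω ∂ℙ = 0) (hEY : ∀ n, ∫ ω, Y n ω ∂ℙ = 0)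
    (hEZ : ∀ n, ∫ ω, Z n ω ∂ℙ = 0)
    (hCLT : ∀ x : ℝ,
      Tendsto (fun n => ℙ {ω | X n ω / Real.sqrt (variance (X n) ℙ) ≤ x}) atTop
        (𝓝 (gaussianReal 0 1 (Set.Iic x))))
    (hv0 : ∀ᶠ n in atTop, 0 < variance (X n) ℙ)
    (hw0 : ∀ᶠ n in atTop, 0 < variance (fun ω => X n ω - Y n ω - Z n ω) ℙ)
    (hcst : Tendsto (fun n => Real.sqrt (variance (X n) ℙ)
        / Real.sqrt (variance (fun ω => X n ω - Y n ω - Z n ω) ℙ)) atTop (𝓝 1))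
    (hvy0 : Tendsto (fun n => variance (Y n) ℙ) atTop (𝓝 0))
    (hvz0 : Tendsto (fun n => variance (Z n) ℙ) atTop (𝓝 0))
    (hvx0 : Tendsto (fun n => variance (X n) ℙ) atTop (𝓝 0))
    (hvt : Tendsto (fun n => variance (X n) ℙ
        / Real.sqrt (variance (fun ω => X n ω - Y n ω - Z n ω) ℙ)) atTop (𝓝 0))
    (hyt : Tendsto (fun n => variance (Y n) ℙ
        / Real.sqrt (variance (fun ω => X n ω - Y n ω - Z n ω) ℙ)) atTop (𝓝 0))
    (hzt : Tendsto (fun n => variance (Z n) ℙ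
        / Real.sqrt (variance (fun ω => X n ω - Y n ω - Z n ω) ℙ)) atTop (𝓝 0))
    (hyw : Tendsto (fun n => variance (Y n) ℙ
        / variance (fun ω => X n ω - Y n ω - Z n ω) ℙ) atTop (𝓝 0))
    (hzw : Tendsto (fun n => variance (Z n) ℙ
        / variance (fun ω => X n ω - Y n ω - Z n ω) ℙ) atTop (𝓝 0)) :
    ∀ ε : ℝ, 0 < ε →
      Tendsto (fun n => ℙ {ω |
        ε ≤ |Real.log ((1 + X n ω) / ((1 + Y n ω) * (1 + Z n ω)))
              / Real.sqrt (variance (fun ω => X n ω - Y n ω - Z n ω) ℙ)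
            - X n ω / Real.sqrt (variance (X n) ℙ)|}) atTop (𝓝 0) := by
  intro ε hε
  rw [ENNReal.tendsto_nhds_zero]
  intro η hη
  have hmin_ne_top : min η 1 ≠ ⊤ := ne_top_of_le_ne_top ENNReal.one_ne_top (min_le_right _ _)
  set η1 : ℝ := (min η 1).toReal with hη1def
  have hη1pos : 0 < η1 := ENNReal.toReal_pos (lt_min hη zero_lt_one).ne' hmin_ne_top
  have hη1le : ENNReal.ofReal η1 ≤ η := by
    rw [hη1def, ENNReal.ofReal_toReal hmin_ne_top]
    exact min_le_left _ _
  obtain ⟨M, hM, htight⟩ := tight (U := fun n ω => X n ω / Real.sqrt (variance (X n) ℙ))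
    (fun n => (hXmeas n).div_const _) hCLT (η1/2) (by linarith)
  -- eventual smallness facts
  have b1 : ∀ᶠ n in atTop, variance (X n) ℙ ≤ η1/64 :=
    hvx0.eventually (eventually_le_nhds (by positivity))
  have b2 : ∀ᶠ n in atTop, variance (Y n) ℙ ≤ η1/64 :=
    hvy0.eventually (eventually_le_nhds (by positivity))
  have b3 : ∀ᶠ n in atTop, variance (Z n) ℙ ≤ η1/64 :=
    hvz0.eventually (eventually_le_nhds (by positivity))
  have b4 : ∀ᶠ n in atTop, variance (X n) ℙ
      / Real.sqrt (variance (fun ω => X n ω - Y n ω - Z n ω) ℙ) ≤ ε*η1/640 :=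
    hvt.eventually (eventually_le_nhds (by positivity))
  have b5 : ∀ᶠ n in atTop, variance (Y n) ℙ
      / Real.sqrt (variance (fun ω => X n ω - Y n ω - Z n ω) ℙ) ≤ ε*η1/640 :=
    hyt.eventually (eventually_le_nhds (by positivity))
  have b6 : ∀ᶠ n in atTop, variance (Z n) ℙ
      / Real.sqrt (variance (fun ω => X n ω - Y n ω - Z n ω) ℙ) ≤ ε*η1/640 :=
    hzt.eventually (eventually_le_nhds (by positivity))
  have b7 : ∀ᶠ n in atTop, variance (Y n) ℙ
      / variance (fun ω => X n ω - Y n ω - Z n ω) ℙ ≤ ε^2*η1/6400 :=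
    hyw.eventually (eventually_le_nhds (by positivity))
  have b8 : ∀ᶠ n in atTop, variance (Z n) ℙ
      / variance (fun ω => X n ω - Y n ω - Z n ω) ℙ ≤ ε^2*η1/6400 :=
    hzw.eventually (eventually_le_nhds (by positivity))
  have bc : ∀ᶠ n in atTop, |Real.sqrt (variance (X n) ℙ)
      / Real.sqrt (variance (fun ω => X n ω - Y n ω - Z n ω) ℙ) - 1| < ε/(8*M) := by
    have := (Metric.tendsto_nhds.mp hcst) (ε/(8*M)) (by positivity)
    simpa [Real.dist_eq] using this
  filter_upwards [hv0, hw0, b1, b2, b3, b4, b5, b6, b7, b8, bc, htight] with n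
    hvn hwn h1 h2 h3 h4 h5 h6 h7 h8 hcn h9
  -- notation
  set vn : ℝ := variance (X n) ℙ with hvdef
  set wn : ℝ := variance (fun ω => X n ω - Y n ω - Z n ω) ℙ with hwdef
  set σn : ℝ := Real.sqrt vn with hσdef
  set τn : ℝ := Real.sqrt wn with hτdef
  have hσpos : 0 < σn := Real.sqrt_pos.mpr hvn
  have hτpos : 0 < τn := Real.sqrt_pos.mpr hwn
  have hτsq : τn^2 = wn := Real.sq_sqrt hwn.le
  -- the nine exceptional events
  set A1 : Set Ω := {ω | (1:ℝ)/2 ≤ |X n ω|} with hA1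
  set A2 : Set Ω := {ω | (1:ℝ)/2 ≤ |Y n ω|} with hA2
  set A3 : Set Ω := {ω | (1:ℝ)/2 ≤ |Z n ω|} with hA3
  set A4 : Set Ω := {ω | Real.sqrt (ε*τn/40) ≤ |X n ω|} with hA4
  set A5 : Set Ω := {ω | Real.sqrt (ε*τn/40) ≤ |Y n ω|} with hA5
  set A6 : Set Ω := {ω | Real.sqrt (ε*τn/40) ≤ |Z n ω|} with hA6
  set A7 : Set Ω := {ω | ε*τn/20 ≤ |Y n ω|} with hA7
  set A8 : Set Ω := {ω | ε*τn/20 ≤ |Z n ω|} with hA8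
  set A9 : Set Ω := {ω | M < |X n ω / σn|} with hA9
  have hsqpos : (0:ℝ) < ε*τn/40 := by positivity
  -- inclusion
  have hincl : {ω | ε ≤ |Real.log ((1 + X n ω) / ((1 + Y n ω) * (1 + Z n ω))) / τn
      - X n ω / σn|} ⊆ A1 ∪ (A2 ∪ (A3 ∪ (A4 ∪ (A5 ∪ (A6 ∪ (A7 ∪ (A8 ∪ A9))))))) := by
    intro ω hω
    simp only [mem_setOf_eq] at hω
    by_contra hnot
    simp only [hA1, hA2, hA3, hA4, hA5, hA6, hA7, hA8, hA9, mem_union, mem_setOf_eq,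
      not_or, not_le, not_lt] at hnot
    obtain ⟨n1, n2, n3, n4, n5, n6, n7, n8, n9⟩ := hnot
    -- squares are small
    have hx2 : (X n ω)^2 < ε*τn/40 := by
      have h := mul_self_lt_mul_self (abs_nonneg (X n ω)) n4
      rw [Real.mul_self_sqrt hsqpos.le, abs_mul_abs_self] at h
      rw [pow_two]; exact h
    have hy2 : (Y n ω)^2 < ε*τn/40 := by
      have h := mul_self_lt_mul_self (abs_nonneg (Y n ω)) n5
      rw [Real.mul_self_sqrt hsqpos.le, abs_mul_abs_self] at h
      rw [pow_two]; exact h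
    have hz2 : (Z n ω)^2 < ε*τn/40 := by
      have h := mul_self_lt_mul_self (abs_nonneg (Z n ω)) n6
      rw [Real.mul_self_sqrt hsqpos.le, abs_mul_abs_self] at h
      rw [pow_two]; exact h
    -- log expansion
    have hax : (0:ℝ) < 1 + X n ω := by
      have := abs_lt.mp n1; linarith [this.1]
    have hay : (0:ℝ) < 1 + Y n ω := by
      have := abs_lt.mp n2; linarith [this.1]
    have haz : (0:ℝ) < 1 + Z n ω := by
      have := abs_lt.mp n3; linarith [this.1]
    have hlog : Real.log ((1 + X n ω) / ((1 + Y n ω) * (1 + Z n ω)))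
        = Real.log (1 + X n ω) - Real.log (1 + Y n ω) - Real.log (1 + Z n ω) := by
      rw [Real.log_div hax.ne' (mul_ne_zero hay.ne' haz.ne'), Real.log_mul hay.ne' haz.ne']
      ring
    have hpx := log_one_add_sub_le (t := X n ω) n1.le
    have hpy := log_one_add_sub_le (t := Y n ω) n2.le
    have hpz := log_one_add_sub_le (t := Z n ω) n3.le
    obtain ⟨hpx1, hpx2⟩ := abs_le.mp hpx
    obtain ⟨hpy1, hpy2⟩ := abs_le.mp hpy
    obtain ⟨hpz1, hpz2⟩ := abs_le.mp hpz
    obtain ⟨hy1, hy2'⟩ := abs_lt.mp n7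
    obtain ⟨hz1, hz2'⟩ := abs_lt.mp n8
    -- |L - X| < ε τ / 4
    have hL : |Real.log ((1 + X n ω) / ((1 + Y n ω) * (1 + Z n ω))) - X n ω| < ε*τn/4 := by
      rw [hlog, abs_lt]
      constructor <;> linarith
    -- decomposition
    have hdecomp : Real.log ((1 + X n ω) / ((1 + Y n ω) * (1 + Z n ω))) / τn - X n ω / σn
        = (Real.log ((1 + X n ω) / ((1 + Y n ω) * (1 + Z n ω))) - X n ω) / τn
          + (X n ω / σn) * (σn/τn - 1) := by
      have e1 : (X n ω/σn)*(σn/τn) = X n ω/τn := by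
        field_simp
      rw [mul_sub, e1, mul_one, sub_div]
      ring
    have hterm1 : |(Real.log ((1 + X n ω) / ((1 + Y n ω) * (1 + Z n ω))) - X n ω) / τn| < ε/4 := by
      rw [abs_div, abs_of_pos hτpos, div_lt_iff₀ hτpos]
      calc |Real.log ((1 + X n ω) / ((1 + Y n ω) * (1 + Z n ω))) - X n ω| < ε*τn/4 := hL
      _ = ε/4*τn := by ring
    have hterm2 : |(X n ω / σn) * (σn/τn - 1)| ≤ ε/8 := by
      rw [abs_mul]
      calc |X n ω / σn| * |σn/τn - 1| ≤ M * (ε/(8*M)) := by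
            apply mul_le_mul n9 hcn.le (abs_nonneg _) hM.le
      _ = ε/8 := by
            have hMne : M ≠ 0 := hM.ne'
            field_simp
    have : |Real.log ((1 + X n ω) / ((1 + Y n ω) * (1 + Z n ω))) / τn - X n ω / σn| < ε := by
      rw [hdecomp]
      calc |(Real.log ((1 + X n ω) / ((1 + Y n ω) * (1 + Z n ω))) - X n ω) / τn
          + (X n ω / σn) * (σn/τn - 1)|
          ≤ |(Real.log ((1 + X n ω) / ((1 + Y n ω) * (1 + Z n ω))) - X n ω) / τn|
            + |(X n ω / σn) * (σn/τn - 1)| := abs_add_le _ _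
      _ < ε/4 + ε/8 := by linarith
      _ < ε := by linarith
    linarith [hω]
  -- measure bounds for each event
  have hc12 : (0:ℝ) < (1:ℝ)/2 := by norm_num
  have hbA1 : ℙ A1 ≤ ENNReal.ofReal (η1/16) := by
    refine le_trans (cheb (hX2 n) (hEX n) hc12) (ENNReal.ofReal_le_ofReal ?_)
    rw [div_le_iff₀ (by norm_num : (0:ℝ) < ((1:ℝ)/2)^2)]
    norm_num
    linarith
  have hbA2 : ℙ A2 ≤ ENNReal.ofReal (η1/16) := by
    refine le_trans (cheb (hY2 n) (hEY n) hc12) (ENNReal.ofReal_le_ofReal ?_)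
    rw [div_le_iff₀ (by norm_num : (0:ℝ) < ((1:ℝ)/2)^2)]
    norm_num
    linarith
  have hbA3 : ℙ A3 ≤ ENNReal.ofReal (η1/16) := by
    refine le_trans (cheb (hZ2 n) (hEZ n) hc12) (ENNReal.ofReal_le_ofReal ?_)
    rw [div_le_iff₀ (by norm_num : (0:ℝ) < ((1:ℝ)/2)^2)]
    norm_num
    linarith
  have hsq : Real.sqrt (ε*τn/40) ^ 2 = ε*τn/40 := Real.sq_sqrt hsqpos.le
  have hsqrtpos : 0 < Real.sqrt (ε*τn/40) := Real.sqrt_pos.mpr hsqpos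
  have hbA4 : ℙ A4 ≤ ENNReal.ofReal (η1/16) := by
    refine le_trans (cheb (hX2 n) (hEX n) hsqrtpos) (ENNReal.ofReal_le_ofReal ?_)
    rw [hsq]
    rw [div_le_iff₀ hsqpos]
    have : vn ≤ ε*η1/640 * τn := (div_le_iff₀ hτpos).mp h4
    calc vn ≤ ε*η1/640 * τn := this
    _ = η1/16 * (ε*τn/40) := by ring
  have hbA5 : ℙ A5 ≤ ENNReal.ofReal (η1/16) := by
    refine le_trans (cheb (hY2 n) (hEY n) hsqrtpos) (ENNReal.ofReal_le_ofReal ?_)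
    rw [hsq, div_le_iff₀ hsqpos]
    have : variance (Y n) ℙ ≤ ε*η1/640 * τn := (div_le_iff₀ hτpos).mp h5
    calc variance (Y n) ℙ ≤ ε*η1/640 * τn := this
    _ = η1/16 * (ε*τn/40) := by ring
  have hbA6 : ℙ A6 ≤ ENNReal.ofReal (η1/16) := by
    refine le_trans (cheb (hZ2 n) (hEZ n) hsqrtpos) (ENNReal.ofReal_le_ofReal ?_)
    rw [hsq, div_le_iff₀ hsqpos]
    have : variance (Z n) ℙ ≤ ε*η1/640 * τn := (div_le_iff₀ hτpos).mp h6
    calc variance (Z n) ℙ ≤ ε*η1/640 * τn := this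
    _ = η1/16 * (ε*τn/40) := by ring
  have hc720 : (0:ℝ) < ε*τn/20 := by positivity
  have hbA7 : ℙ A7 ≤ ENNReal.ofReal (η1/16) := by
    refine le_trans (cheb (hY2 n) (hEY n) hc720) (ENNReal.ofReal_le_ofReal ?_)
    have hsq7 : (ε*τn/20)^2 = ε^2*wn/400 := by rw [div_pow, mul_pow, hτsq]; ring
    rw [hsq7, div_le_iff₀ (by positivity : (0:ℝ) < ε^2*wn/400)]
    have : variance (Y n) ℙ ≤ ε^2*η1/6400 * wn := (div_le_iff₀ hwn).mp h7
    calc variance (Y n) ℙ ≤ ε^2*η1/6400 * wn := this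
    _ = η1/16 * (ε^2*wn/400) := by ring
  have hbA8 : ℙ A8 ≤ ENNReal.ofReal (η1/16) := by
    refine le_trans (cheb (hZ2 n) (hEZ n) hc720) (ENNReal.ofReal_le_ofReal ?_)
    have hsq7 : (ε*τn/20)^2 = ε^2*wn/400 := by rw [div_pow, mul_pow, hτsq]; ring
    rw [hsq7, div_le_iff₀ (by positivity : (0:ℝ) < ε^2*wn/400)]
    have : variance (Z n) ℙ ≤ ε^2*η1/6400 * wn := (div_le_iff₀ hwn).mp h8
    calc variance (Z n) ℙ ≤ ε^2*η1/6400 * wn := this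
    _ = η1/16 * (ε^2*wn/400) := by ring
  have hbA9 : ℙ A9 ≤ ENNReal.ofReal (η1/2) := h9
  -- combine
  calc ℙ {ω | ε ≤ |Real.log ((1 + X n ω) / ((1 + Y n ω) * (1 + Z n ω))) / τn - X n ω / σn|}
      ≤ ℙ (A1 ∪ (A2 ∪ (A3 ∪ (A4 ∪ (A5 ∪ (A6 ∪ (A7 ∪ (A8 ∪ A9)))))))) := measure_mono hincl
  _ ≤ ℙ A1 + (ℙ A2 + (ℙ A3 + (ℙ A4 + (ℙ A5 + (ℙ A6 + (ℙ A7 + (ℙ A8 + ℙ A9))))))) := by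
      refine le_trans (measure_union_le _ _) ?_
      gcongr
      refine le_trans (measure_union_le _ _) ?_
      gcongr
      refine le_trans (measure_union_le _ _) ?_
      gcongr
      refine le_trans (measure_union_le _ _) ?_
      gcongr
      refine le_trans (measure_union_le _ _) ?_
      gcongr
      refine le_trans (measure_union_le _ _) ?_
      gcongr
      refine le_trans (measure_union_le _ _) ?_
      gcongr
      exact measure_union_le _ _
  _ ≤ ENNReal.ofReal (η1/16) + (ENNReal.ofReal (η1/16) + (ENNReal.ofReal (η1/16)
      + (ENNReal.ofReal (η1/16) + (ENNReal.ofReal (η1/16) + (ENNReal.ofReal (η1/16)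
      + (ENNReal.ofReal (η1/16) + (ENNReal.ofReal (η1/16) + ENNReal.ofReal (η1/2)))))))) := by
      gcongr <;> assumption
  _ = ENNReal.ofReal (η1/16 + (η1/16 + (η1/16 + (η1/16 + (η1/16 + (η1/16
      + (η1/16 + (η1/16 + η1/2)))))))) := by
      rw [← ENNReal.ofReal_add (by positivity) (by positivity),
        ← ENNReal.ofReal_add (by positivity) (by positivity),
        ← ENNReal.ofReal_add (by positivity) (by positivity),
        ← ENNReal.ofReal_add (by positivity) (by positivity),
        ← ENNReal.ofReal_add (by positivity) (by positivity),
        ← ENNReal.ofReal_add (by positivity) (by positivity),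
        ← ENNReal.ofReal_add (by positivity) (by positivity),
        ← ENNReal.ofReal_add (by positivity) (by positivity)]
  _ = ENNReal.ofReal η1 := by
      congr 1
      ring
  _ ≤ η := hη1le


end Stmt11Aux

open Stmt11Aux in
/-- Delta-method asymptotic normality for the PMI-type statistic
`log((1+Xₙ)/((1+Yₙ)(1+Zₙ)))`: if `Xₙ, Yₙ, Zₙ ≥ -1` are centered with
`Var(Yₙ) = o(Var(Xₙ))`, `Var(Zₙ) = o(Var(Xₙ))`, `Var(Xₙ) → 0`, and
`Xₙ/√Var(Xₙ) → N(0,1)` in distribution, then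
`log((1+Xₙ)/((1+Yₙ)(1+Zₙ)))/√Var(Xₙ - Yₙ - Zₙ) → N(0,1)` in distribution. -/
theorem stmt11 {Ω : Type*} [MeasureSpace Ω] [IsProbabilityMeasure (ℙ : Measure Ω)]
    (X Y Z : ℕ → Ω → ℝ)
    (hXmeas : ∀ n, Measurable (X n)) (hYmeas : ∀ n, Measurable (Y n))
    (hZmeas : ∀ n, Measurable (Z n))
    (hX2 : ∀ n, MemLp (X n) 2 ℙ) (hY2 : ∀ n, MemLp (Y n) 2 ℙ)
    (hZ2 : ∀ n, MemLp (Z n) 2 ℙ)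
    (hXlb : ∀ n ω, -1 ≤ X n ω) (hYlb : ∀ n ω, -1 ≤ Y n ω) (hZlb : ∀ n ω, -1 ≤ Z n ω)
    (hEX : ∀ n, ∫ ω, X n ω ∂ℙ = 0) (hEY : ∀ n, ∫ ω, Y n ω ∂ℙ = 0)
    (hEZ : ∀ n, ∫ ω, Z n ω ∂ℙ = 0)
    (hVY : (fun n => variance (Y n) ℙ) =o[atTop] fun n => variance (X n) ℙ)
    (hVZ : (fun n => variance (Z n) ℙ) =o[atTop] fun n => variance (X n) ℙ)
    (hVX : Tendsto (fun n => variance (X n) ℙ) atTop (nhds 0))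
    (hCLT : ∀ x : ℝ,
      Tendsto (fun n => ℙ {ω | X n ω / Real.sqrt (variance (X n) ℙ) ≤ x}) atTop
        (nhds (gaussianReal 0 1 (Set.Iic x)))) :
    ∀ x : ℝ,
      Tendsto (fun n =>
          ℙ {ω | Real.log ((1 + X n ω) / ((1 + Y n ω) * (1 + Z n ω)))
              / Real.sqrt (variance (fun ω => X n ω - Y n ω - Z n ω) ℙ) ≤ x}) atTop
        (nhds (gaussianReal 0 1 (Set.Iic x))) := by
  -- eventual positivity of Var(X n)
  have hv0 : ∀ᶠ n in atTop, 0 < variance (X n) ℙ := by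
    by_contra hcon
    rw [Filter.not_eventually] at hcon
    have hfreq : ∃ᶠ n in atTop, variance (X n) ℙ = 0 :=
      hcon.mono (fun n hn => le_antisymm (not_lt.mp hn) (variance_nonneg _ _))
    obtain ⟨φ, hφ, hkey⟩ := Filter.extraction_of_frequently_atTop hfreq
    have h1 : Tendsto (fun k => ℙ {ω | X (φ k) ω / Real.sqrt (variance (X (φ k)) ℙ) ≤ (0:ℝ)})
        atTop (𝓝 (gaussianReal 0 1 (Set.Iic (0:ℝ)))) := (hCLT 0).comp hφ.tendsto_atTop
    have h2 : ∀ k, ℙ {ω | X (φ k) ω / Real.sqrt (variance (X (φ k)) ℙ) ≤ (0:ℝ)} = 1 := by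
      intro k
      have hs : {ω | X (φ k) ω / Real.sqrt (variance (X (φ k)) ℙ) ≤ (0:ℝ)} = univ := by
        ext ω
        simp [hkey k]
      rw [hs, measure_univ]
    have h3 : Tendsto (fun _ : ℕ => (1:ENNReal)) atTop (𝓝 (gaussianReal 0 1 (Set.Iic (0:ℝ)))) :=
      h1.congr h2
    have h4 := tendsto_nhds_unique h3 tendsto_const_nhds
    exact absurd h4 (Phi_lt_one 0).ne
  have hr := ratio_tendsto X Y Z hX2 hY2 hZ2 hEX hEY hEZ hVY hVZ hv0
  have hw0 : ∀ᶠ n in atTop, 0 < variance (fun ω => X n ω - Y n ω - Z n ω) ℙ := by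
    have h12 : ∀ᶠ n in atTop, (1:ℝ)/2
        < variance (fun ω => X n ω - Y n ω - Z n ω) ℙ / variance (X n) ℙ :=
      hr.eventually (eventually_gt_nhds (by norm_num))
    filter_upwards [h12, hv0] with n hn hvn
    have := (lt_div_iff₀ hvn).mp hn
    linarith
  have hvw : Tendsto (fun n => variance (X n) ℙ
      / variance (fun ω => X n ω - Y n ω - Z n ω) ℙ) atTop (𝓝 1) := by
    have h := hr.inv₀ one_ne_zero
    rw [inv_one] at h
    exact h.congr (fun n => inv_div _ _)
  have hcst : Tendsto (fun n => Real.sqrt (variance (X n) ℙ)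
      / Real.sqrt (variance (fun ω => X n ω - Y n ω - Z n ω) ℙ)) atTop (𝓝 1) := by
    have hcont : Tendsto Real.sqrt (𝓝 1) (𝓝 1) := by
      have := Real.continuous_sqrt.tendsto 1
      simpa using this
    have h := hcont.comp hvw
    exact h.congr (fun n => by
      rw [Function.comp_apply, Real.sqrt_div (variance_nonneg _ _)])
  have hwt0 : Tendsto (fun n => variance (fun ω => X n ω - Y n ω - Z n ω) ℙ) atTop (𝓝 0) := by
    have h : Tendsto (fun n => (variance (fun ω => X n ω - Y n ω - Z n ω) ℙ
        / variance (X n) ℙ) * variance (X n) ℙ) atTop (𝓝 (1*0)) := hr.mul hVX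
    rw [one_mul] at h
    have heq : (fun n => (variance (fun ω => X n ω - Y n ω - Z n ω) ℙ
        / variance (X n) ℙ) * variance (X n) ℙ)
        =ᶠ[atTop] (fun n => variance (fun ω => X n ω - Y n ω - Z n ω) ℙ) :=
      hv0.mono (fun n hn => div_mul_cancel₀ _ hn.ne')
    exact Tendsto.congr' heq h
  have hsqrt0 : Tendsto Real.sqrt (𝓝 0) (𝓝 0) := by
    have := Real.continuous_sqrt.tendsto 0
    simpa using this
  have hσ0 : Tendsto (fun n => Real.sqrt (variance (X n) ℙ)) atTop (𝓝 0) := hsqrt0.comp hVX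
  have hvt : Tendsto (fun n => variance (X n) ℙ
      / Real.sqrt (variance (fun ω => X n ω - Y n ω - Z n ω) ℙ)) atTop (𝓝 0) := by
    have h := hσ0.mul hcst
    rw [zero_mul] at h
    exact h.congr (fun n => by
      rw [← mul_div_assoc, Real.mul_self_sqrt (variance_nonneg _ _)])
  have hyv : Tendsto (fun n => variance (Y n) ℙ / variance (X n) ℙ) atTop (𝓝 0) :=
    hVY.tendsto_div_nhds_zero
  have hzv : Tendsto (fun n => variance (Z n) ℙ / variance (X n) ℙ) atTop (𝓝 0) :=
    hVZ.tendsto_div_nhds_zero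
  have hvy0 : Tendsto (fun n => variance (Y n) ℙ) atTop (𝓝 0) := by
    have h := hyv.mul hVX
    rw [zero_mul] at h
    refine Tendsto.congr' ?_ h
    exact hv0.mono (fun n hn => div_mul_cancel₀ _ hn.ne')
  have hvz0 : Tendsto (fun n => variance (Z n) ℙ) atTop (𝓝 0) := by
    have h := hzv.mul hVX
    rw [zero_mul] at h
    refine Tendsto.congr' ?_ h
    exact hv0.mono (fun n hn => div_mul_cancel₀ _ hn.ne')
  have hyw : Tendsto (fun n => variance (Y n) ℙ
      / variance (fun ω => X n ω - Y n ω - Z n ω) ℙ) atTop (𝓝 0) := by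
    have h := hyv.mul hvw
    rw [zero_mul] at h
    refine Tendsto.congr' ?_ h
    filter_upwards [hv0] with n hn
    exact div_mul_div_cancel₀ hn.ne'
  have hzw : Tendsto (fun n => variance (Z n) ℙ
      / variance (fun ω => X n ω - Y n ω - Z n ω) ℙ) atTop (𝓝 0) := by
    have h := hzv.mul hvw
    rw [zero_mul] at h
    refine Tendsto.congr' ?_ h
    filter_upwards [hv0] with n hn
    exact div_mul_div_cancel₀ hn.ne'
  have hyt : Tendsto (fun n => variance (Y n) ℙ
      / Real.sqrt (variance (fun ω => X n ω - Y n ω - Z n ω) ℙ)) atTop (𝓝 0) := by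
    have h := hyv.mul hvt
    rw [zero_mul] at h
    refine Tendsto.congr' ?_ h
    filter_upwards [hv0] with n hn
    exact div_mul_div_cancel₀ hn.ne'
  have hzt : Tendsto (fun n => variance (Z n) ℙ
      / Real.sqrt (variance (fun ω => X n ω - Y n ω - Z n ω) ℙ)) atTop (𝓝 0) := by
    have h := hzv.mul hvt
    rw [zero_mul] at h
    refine Tendsto.congr' ?_ h
    filter_upwards [hv0] with n hn
    exact div_mul_div_cancel₀ hn.ne'
  have hd := diff_small X Y Z hXmeas hX2 hY2 hZ2 hEX hEY hEZ hCLT hv0 hw0 hcst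
    hvy0 hvz0 hVX hvt hyt hzt hyw hzw
  intro x
  exact slutsky (S := fun n ω => Real.log ((1 + X n ω) / ((1 + Y n ω) * (1 + Z n ω)))
      / Real.sqrt (variance (fun ω => X n ω - Y n ω - Z n ω) ℙ))
    (U := fun n ω => X n ω / Real.sqrt (variance (X n) ℙ)) hCLT hd x
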